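/- For k ≥ 2 and even d, the hairy spider HS_{d,k} is a tree of diameter d, metric dimension k, and order (1/8)(kd+4)(d+2). -/

import Mathlib

/-- A set `R` of vertices of a graph `G` is a resolving set. -/
def SimpleGraph.IsResolvingSet {V : Type*} (G : SimpleGraph V) (R : Set V) : Prop :=
  ∀ u v : V, u ≠ v → ∃ x ∈ R, G.dist x u ≠ G.dist x v

/-- The metric dimension of `G` is `k`. -/
def SimpleGraph.HasMetricDim {V : Type*} (G : SimpleGraph V) (k : ℕ) : Prop :=
  (∃ R : Finset V, G.IsResolvingSet ↑R ∧ R.card = k) ∧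
    ∀ R : Finset V, G.IsResolvingSet ↑R → k ≤ R.card

/-- Vertices of one copy of the rooted tree `L_r` (without its root): a pair `(i, j)`
with `1 ≤ i ≤ r` and `0 ≤ j ≤ r - i`; the vertex `(i, 0)` is the spine vertex `v_i`,
and for `j ≥ 1` the vertex `(i, j)` is the `j`-th vertex of the path of length `r - i`
attached at `v_i`. -/
def LVert (r : ℕ) : Type :=
  {p : Fin (r + 1) × Fin (r + 1) // 1 ≤ (p.1 : ℕ) ∧ (p.2 : ℕ) ≤ r - (p.1 : ℕ)}

/-- Vertices of the hairy spider `HS_{2r,k}`: the root, a pendant path of length `r`,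
and `k` copies of `L_r` minus their (identified) roots. -/
def HSVert (r k : ℕ) : Type :=
  Unit ⊕ Fin r ⊕ (Fin k × LVert r)

/-- The edge relation of the hairy spider (before symmetrisation). -/
def hsRel (r k : ℕ) : HSVert r k → HSVert r k → Prop
  | Sum.inl _, Sum.inr (Sum.inl t) => (t : ℕ) = 0
  | Sum.inr (Sum.inl t), Sum.inr (Sum.inl t') => (t' : ℕ) = (t : ℕ) + 1
  | Sum.inl _, Sum.inr (Sum.inr (_, p)) => (p.1.1 : ℕ) = 1 ∧ (p.1.2 : ℕ) = 0
  | Sum.inr (Sum.inr (c, p)), Sum.inr (Sum.inr (c', p')) =>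
      c = c' ∧
        (((p'.1.1 : ℕ) = (p.1.1 : ℕ) + 1 ∧ (p.1.2 : ℕ) = 0 ∧ (p'.1.2 : ℕ) = 0) ∨
          ((p'.1.1 : ℕ) = (p.1.1 : ℕ) ∧ (p'.1.2 : ℕ) = (p.1.2 : ℕ) + 1))
  | _, _ => False

/-- The hairy spider `HS_{d,k}` (with `d = 2r`): obtained from `k` disjoint copies of
`L_r` and one path `P_r*` by identifying all their roots into a single vertex. -/
def HS (r k : ℕ) : SimpleGraph (HSVert r k) := SimpleGraph.fromRel (hsRel r k)

instance (r k : ℕ) : Fintype (HSVert r k) := by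
  unfold HSVert LVert; infer_instance

/-! ### Generic graph lemmas -/

section Generic

variable {V : Type*} {G : SimpleGraph V}

lemma le_length_of_walk (f : V → ℕ) (hf : ∀ a b, G.Adj a b → f b ≤ f a + 1) :
    ∀ {u v : V} (p : G.Walk u v), f v ≤ f u + p.length := by
  intro u v p
  induction p with
  | nil => simp
  | @cons a b c h q ih =>
    have h1 := hf a b h
    simp only [SimpleGraph.Walk.length_cons]
    omega

lemma le_dist_of_fun (f : V → ℕ) (hf : ∀ a b, G.Adj a b → f b ≤ f a + 1) {u v : V}
    (hreach : G.Reachable u v) : f v ≤ f u + G.dist u v := by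
  obtain ⟨p, hp⟩ := hreach.exists_walk_length_eq_dist
  rw [← hp]
  exact le_length_of_walk f hf p

lemma acyclic_of_parent (par : V → V) (dp : V → ℕ)
    (hadj : ∀ u v, G.Adj u v → (u = par v ∧ dp u + 1 = dp v) ∨ (v = par u ∧ dp v + 1 = dp u)) :
    G.IsAcyclic := by
  classical
  intro x c hc
  obtain ⟨m, hm, hmax⟩ : ∃ m ∈ c.support, ∀ y ∈ c.support, dp y ≤ dp m := by
    obtain ⟨m, hm1, hm2⟩ := (c.support.toFinset).exists_max_image dp
      ⟨x, by simp [List.mem_toFinset]⟩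
    exact ⟨m, List.mem_toFinset.mp hm1, fun y hy => hm2 y (List.mem_toFinset.mpr hy)⟩
  have hc' : (c.rotate m hm).IsCycle := hc.rotate hm
  have hmem : ∀ y, y ∈ (c.rotate m hm).support → y ∈ c.support := by
    intro y hy
    rw [SimpleGraph.Walk.support_eq_cons] at hy
    rcases List.mem_cons.mp hy with h | h
    · rwa [h]
    · exact List.mem_of_mem_tail
        (((SimpleGraph.Walk.support_rotate c m hm).mem_iff).mp h)
  set c' := c.rotate m hm with hc'def
  have hlen : 3 ≤ c'.length := hc'.three_le_length
  have hnil : ¬ c'.Nil := by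
    intro hn
    rw [SimpleGraph.Walk.nil_iff_length_eq] at hn
    omega
  obtain ⟨b, h, q, heq⟩ := SimpleGraph.Walk.not_nil_iff.mp hnil
  obtain ⟨x', q', h', heq'⟩ := SimpleGraph.Walk.exists_cons_eq_concat h q
  -- b and x' are in the support of c'
  have hbmem : b ∈ c.support := by
    apply hmem
    rw [heq]
    simp [SimpleGraph.Walk.support_cons]
  have hxmem : x' ∈ c.support := by
    apply hmem
    rw [heq, heq', SimpleGraph.Walk.concat_eq_append]
    rw [SimpleGraph.Walk.mem_support_append_iff]
    exact Or.inl (SimpleGraph.Walk.end_mem_support q')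
  -- both must equal par m
  have hb : b = par m := by
    rcases hadj m b h with ⟨h1, h2⟩ | ⟨h1, h2⟩
    · have := hmax b hbmem; omega
    · exact h1
  have hx : x' = par m := by
    rcases hadj x' m h' with ⟨h1, h2⟩ | ⟨h1, h2⟩
    · exact h1
    · have := hmax x' hxmem; omega
  -- edge duplication
  have hedges : s(m, b) :: q.edges = q'.edges ++ [s(x', m)] := by
    have := congrArg SimpleGraph.Walk.edges heq'
    simpa [SimpleGraph.Walk.edges_concat] using this
  have hnodup : (s(m, b) :: q.edges).Nodup := by
    have := hc'.isTrail.edges_nodup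
    rw [heq] at this
    simpa using this
  have hq'ne : q'.edges ≠ [] := by
    intro hnilq
    have hl : q'.edges.length = q'.length := SimpleGraph.Walk.length_edges q'
    have : q'.length = 0 := by rw [← hl, hnilq]; rfl
    have : c'.length = 1 := by
      rw [heq, heq', SimpleGraph.Walk.length_concat]
      omega
    omega
  obtain ⟨e0, rest, hq'e⟩ := List.exists_cons_of_ne_nil hq'ne
  rw [hq'e] at hedges
  simp only [List.cons_append, List.cons.injEq] at hedges
  have hmemedge : s(x', m) ∈ q.edges := by
    rw [hedges.2]
    simp
  have : s(x', m) = s(m, b) := by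
    rw [hb, hx]
    exact Sym2.eq_swap
  rw [this] at hmemedge
  exact (List.nodup_cons.mp hnodup).1 hmemedge

lemma dist_pendant (hG : G.Connected) {v m : V}
    (hm : G.Adj m v) (huniq : ∀ x, G.Adj x v → x = m) {z : V} (hz : z ≠ v) :
    G.dist z v = G.dist z m + 1 := by
  refine le_antisymm ?_ ?_
  · calc G.dist z v ≤ G.dist z m + G.dist m v := hG.dist_triangle
    _ = G.dist z m + 1 := by rw [SimpleGraph.dist_eq_one_iff_adj.mpr hm]
  · obtain ⟨p, hp⟩ := (hG z v).exists_walk_length_eq_dist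
    cases p with
    | nil => exact absurd rfl hz
    | cons h q =>
      obtain ⟨x', q', h', heq'⟩ := SimpleGraph.Walk.exists_cons_eq_concat h q
      have hx : x' = m := huniq x' h'
      subst hx
      have hlen : q'.length + 1 = G.dist z v := by
        rw [← hp, heq', SimpleGraph.Walk.length_concat]
      have := SimpleGraph.dist_le q'
      omega

end Generic

/-! ### Auxiliary development -/

namespace HSAux

variable {r k : ℕ}

/-- The root vertex. -/
def root (r k : ℕ) : HSVert r k := Sum.inl ()

/-- Depth (distance to the root). -/
def dep : HSVert r k → ℕ
  | Sum.inl _ => 0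
  | Sum.inr (Sum.inl t) => (t : ℕ) + 1
  | Sum.inr (Sum.inr (_, p)) => (p.1.1 : ℕ) + (p.1.2 : ℕ)

/-- The parent of a vertex (the root is its own parent). -/
def parent : HSVert r k → HSVert r k
  | Sum.inl _ => Sum.inl ()
  | Sum.inr (Sum.inl t) =>
      if h : (t : ℕ) = 0 then Sum.inl ()
      else Sum.inr (Sum.inl ⟨(t : ℕ) - 1, by have := t.isLt; omega⟩)
  | Sum.inr (Sum.inr (c, p)) =>
      if hj : (p.1.2 : ℕ) = 0 then
        if hi : (p.1.1 : ℕ) = 1 then Sum.inl ()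
        else Sum.inr (Sum.inr (c, ⟨(⟨(p.1.1 : ℕ) - 1, by have := p.1.1.isLt; omega⟩,
          ⟨0, by omega⟩), by
            have h1 := p.2.1
            show 1 ≤ (p.1.1 : ℕ) - 1 ∧ (0 : ℕ) ≤ r - ((p.1.1 : ℕ) - 1)
            omega⟩))
      else Sum.inr (Sum.inr (c, ⟨(p.1.1, ⟨(p.1.2 : ℕ) - 1, by have := p.1.2.isLt; omega⟩), by
        have h1 := p.2.1; have h2 := p.2.2
        show 1 ≤ (p.1.1 : ℕ) ∧ (p.1.2 : ℕ) - 1 ≤ r - (p.1.1 : ℕ)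
        omega⟩))

lemma dep_parent (v : HSVert r k) (hv : v ≠ root r k) : dep (parent v) + 1 = dep v := by
  rcases v with _ | t | ⟨c, p⟩
  · exact absurd rfl hv
  · by_cases h : (t : ℕ) = 0 <;> simp [parent, dep, h] <;> omega
  · by_cases hj : (p.1.2 : ℕ) = 0
    · by_cases hi : (p.1.1 : ℕ) = 1
      · simp [parent, dep, hj, hi]
      · have h1 := p.2.1
        simp [parent, dep, hj, hi]; omega
    · have h1 := p.2.1
      simp [parent, dep, hj]; omega

lemma dep_eq_zero {v : HSVert r k} (hv : dep v = 0) : v = root r k := by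
  rcases v with _ | t | ⟨c, p⟩
  · rfl
  · simp [dep] at hv
  · have h1 := p.2.1; simp only [dep] at hv; omega

lemma parent_rel (v : HSVert r k) (hv : v ≠ root r k) : hsRel r k (parent v) v := by
  rcases v with _ | t | ⟨c, p⟩
  · exact absurd rfl hv
  · by_cases h : (t : ℕ) = 0
    · simp [parent, h, hsRel]
    · simp [parent, h, hsRel]; omega
  · by_cases hj : (p.1.2 : ℕ) = 0
    · by_cases hi : (p.1.1 : ℕ) = 1
      · simp [parent, hj, hi, hsRel]
      · have h1 := p.2.1
        simp [parent, hj, hi, hsRel]; omega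
    · simp [parent, hj, hsRel]; omega

lemma parent_ne (v : HSVert r k) (hv : v ≠ root r k) : parent v ≠ v := by
  intro h
  have := dep_parent v hv
  rw [h] at this
  omega

lemma adj_parent (v : HSVert r k) (hv : v ≠ root r k) : (HS r k).Adj (parent v) v := by
  rw [HS, SimpleGraph.fromRel_adj]
  exact ⟨parent_ne v hv, Or.inl (parent_rel v hv)⟩

lemma rel_eq_parent {u v : HSVert r k} (h : hsRel r k u v) :
    v ≠ root r k ∧ u = parent v := by
  rcases u with ⟨⟨⟩⟩ | t | ⟨c, p⟩ <;> rcases v with _ | t' | ⟨c', p'⟩ <;> simp [hsRel] at h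
  · -- root to path
    refine ⟨by unfold root; nofun, ?_⟩
    simp [parent, h]; rfl
  · -- root to copy
    refine ⟨by unfold root; nofun, ?_⟩
    simp [parent, h.1, h.2]; rfl
  · -- path to path
    refine ⟨by unfold root; nofun, ?_⟩
    rw [parent]
    have hne : ¬((t' : ℕ) = 0) := by omega
    refine Eq.trans ?_ (dif_neg hne).symm
    exact congrArg (fun x : Fin r => (Sum.inr (Sum.inl x) : HSVert r k))
      (Fin.ext (show (t : ℕ) = (t' : ℕ) - 1 by omega))
  · -- copy to copy
    obtain ⟨hc, h'⟩ := h
    refine ⟨by unfold root; nofun, ?_⟩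
    rcases h' with ⟨hi, hj, hj'⟩ | ⟨hi, hj⟩
    · rw [parent]
      have hj'0 : (p'.1.2 : ℕ) = 0 := by simp [hj']
      have hi'1 : ¬((p'.1.1 : ℕ) = 1) := by have := p.2.1; omega
      refine Eq.trans ?_ ((dif_pos hj'0).trans (dif_neg hi'1)).symm
      subst hc
      refine congrArg (fun x : LVert r => (Sum.inr (Sum.inr (c, x)) : HSVert r k))
        (Subtype.ext (Prod.ext (Fin.ext ?_) (Fin.ext ?_)))
      · show (p.1.1 : ℕ) = (p'.1.1 : ℕ) - 1; omega
      · show (p.1.2 : ℕ) = 0; simp [hj]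
    · rw [parent]
      have hj'0 : ¬((p'.1.2 : ℕ) = 0) := by omega
      refine Eq.trans ?_ (dif_neg hj'0).symm
      subst hc
      refine congrArg (fun x : LVert r => (Sum.inr (Sum.inr (c, x)) : HSVert r k))
        (Subtype.ext (Prod.ext (Fin.ext ?_) (Fin.ext ?_)))
      · show (p.1.1 : ℕ) = (p'.1.1 : ℕ); omega
      · show (p.1.2 : ℕ) = (p'.1.2 : ℕ) - 1; omega

lemma adj_cases {u v : HSVert r k} (h : (HS r k).Adj u v) :
    (v ≠ root r k ∧ u = parent v) ∨ (u ≠ root r k ∧ v = parent u) := by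
  rw [HS, SimpleGraph.fromRel_adj] at h
  rcases h.2 with h' | h'
  · exact Or.inl (rel_eq_parent h')
  · exact Or.inr (rel_eq_parent h')

lemma reachable_root_aux : ∀ n (v : HSVert r k), dep v ≤ n → (HS r k).Reachable (root r k) v := by
  intro n
  induction n with
  | zero =>
    intro v hv
    rw [dep_eq_zero (Nat.le_zero.mp hv)]
  | succ n ih =>
    intro v hv
    by_cases hroot : v = root r k
    · rw [hroot]
    · have hd := dep_parent v hroot
      exact ((ih (parent v) (by omega)).trans (adj_parent v hroot).reachable)

lemma connected : (HS r k).Connected := by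
  rw [SimpleGraph.connected_iff]
  refine ⟨fun u v => ?_, ⟨root r k⟩⟩
  exact (reachable_root_aux (dep u) u le_rfl).symm.trans (reachable_root_aux (dep v) v le_rfl)

lemma dist_root_le_aux : ∀ n (v : HSVert r k), dep v ≤ n → (HS r k).dist (root r k) v ≤ dep v := by
  intro n
  induction n with
  | zero =>
    intro v hv
    rw [dep_eq_zero (Nat.le_zero.mp hv)]
    rw [SimpleGraph.dist_self]
    exact Nat.zero_le _
  | succ n ih =>
    intro v hv
    by_cases hroot : v = root r k
    · rw [hroot, SimpleGraph.dist_self]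
      exact Nat.zero_le _
    · have hd := dep_parent v hroot
      calc (HS r k).dist (root r k) v
          ≤ (HS r k).dist (root r k) (parent v) + (HS r k).dist (parent v) v :=
            connected.dist_triangle
        _ ≤ dep (parent v) + 1 := by
            have h1 := ih (parent v) (by omega)
            have h2 : (HS r k).dist (parent v) v = 1 :=
              SimpleGraph.dist_eq_one_iff_adj.mpr (adj_parent v hroot)
            omega
        _ = dep v := hd

lemma dist_root_le (v : HSVert r k) : (HS r k).dist (root r k) v ≤ dep v :=
  dist_root_le_aux (dep v) v le_rfl

lemma dep_le (v : HSVert r k) : dep v ≤ r := by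
  rcases v with _ | t | ⟨c, p⟩
  · simp [dep]
  · have := t.isLt; simp [dep]
  · have h1 := p.1.1.isLt
    have h2 := p.2.2
    simp [dep]; omega

/-- A vertex in copy `c` with spine coordinate `i` and hair coordinate `j`. -/
def mkC (c : Fin k) (i j : ℕ) (h1 : 1 ≤ i) (hir : i ≤ r) (h2 : j ≤ r - i) : HSVert r k :=
  Sum.inr (Sum.inr (c, ⟨(⟨i, by omega⟩, ⟨j, by omega⟩), ⟨h1, h2⟩⟩))

/-- The landmark vertex in copy `c`: the end of the spine. -/
def wv (c : Fin k) (hr : 1 ≤ r) : HSVert r k := mkC c r 0 hr le_rfl (by omega)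

/-- Distance from the landmark `wv c`. -/
def gfun (c : Fin k) : HSVert r k → ℕ
  | Sum.inl _ => r
  | Sum.inr (Sum.inl t) => r + ((t : ℕ) + 1)
  | Sum.inr (Sum.inr (c', p)) =>
      if c' = c then (r - (p.1.1 : ℕ)) + (p.1.2 : ℕ)
      else r + ((p.1.1 : ℕ) + (p.1.2 : ℕ))

lemma g_adj (c : Fin k) : ∀ a b : HSVert r k, (HS r k).Adj a b → gfun c b ≤ gfun c a + 1 := by
  have key : ∀ v : HSVert r k, v ≠ root r k →
      (gfun c (parent v) + 1 = gfun c v ∨ gfun c v + 1 = gfun c (parent v)) := by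
    intro v hv
    rcases v with _ | t | ⟨c', p⟩
    · exact absurd rfl hv
    · by_cases h : (t : ℕ) = 0 <;> simp [parent, gfun, h] <;> omega
    · have h1 := p.2.1
      have h2 := p.2.2
      have h3 := p.1.1.isLt
      by_cases hj : (p.1.2 : ℕ) = 0
      · by_cases hi : (p.1.1 : ℕ) = 1
        · by_cases hc : c' = c <;> simp [parent, gfun, hj, hi, hc] <;> omega
        · by_cases hc : c' = c <;> simp [parent, gfun, hj, hi, hc] <;> omega
      · by_cases hc : c' = c <;> simp [parent, gfun, hj, hc] <;> omega
  intro a b hab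
  rcases adj_cases hab with ⟨hb, rfl⟩ | ⟨ha, rfl⟩
  · rcases key b hb with h | h <;> omega
  · rcases key a ha with h | h <;> omega

lemma mkC_eq {c : Fin k} {i j i' j' : ℕ} {h1 hir h2 h1' hir' h2'}
    (hi : i = i') (hj : j = j') :
    (mkC c i j h1 hir h2 : HSVert r k) = mkC c i' j' h1' hir' h2' := by
  subst hi; subst hj; rfl

lemma copy_eq_mkC (c : Fin k) (p : LVert r) :
    (Sum.inr (Sum.inr (c, p)) : HSVert r k) =
      mkC c (p.1.1 : ℕ) (p.1.2 : ℕ) p.2.1 (by have := p.1.1.isLt; omega) p.2.2 := by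
  refine congrArg (fun x : LVert r => (Sum.inr (Sum.inr (c, x)) : HSVert r k)) ?_
  exact Subtype.ext (Prod.ext (Fin.ext rfl) (Fin.ext rfl))

lemma gfun_mkC (c c' : Fin k) (i j : ℕ) (h1 : 1 ≤ i) (hir : i ≤ r) (h2 : j ≤ r - i) :
    gfun c' (mkC c i j h1 hir h2 : HSVert r k) =
      if c = c' then (r - i) + j else r + (i + j) := by
  simp [gfun, mkC]

lemma adj_spine (c : Fin k) (i : ℕ) (h1 : 1 ≤ i) (hir : i + 1 ≤ r) :
    (HS r k).Adj (mkC c i 0 h1 (by omega) (by omega))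
      (mkC c (i + 1) 0 (by omega) hir (by omega)) := by
  rw [HS, SimpleGraph.fromRel_adj]
  constructor
  · intro hcontra
    have := congrArg dep hcontra
    simp [dep, mkC] at this
  · left
    show _ ∧ _
    refine ⟨rfl, Or.inl ?_⟩
    simp [mkC]

lemma adj_hair (c : Fin k) (i j : ℕ) (h1 : 1 ≤ i) (hir : i ≤ r) (h2 : j + 1 ≤ r - i) :
    (HS r k).Adj (mkC c i j h1 hir (by omega)) (mkC c i (j + 1) h1 hir h2) := by
  rw [HS, SimpleGraph.fromRel_adj]
  constructor
  · intro hcontra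
    have := congrArg dep hcontra
    simp [dep, mkC] at this
  · left
    show _ ∧ _
    refine ⟨rfl, Or.inr ?_⟩
    simp [mkC]

lemma dist_le_spine (hr : 1 ≤ r) (c : Fin k) :
    ∀ m (i : ℕ) (h1 : 1 ≤ i) (hir : i ≤ r) (him : i + m = r),
      (HS r k).dist (wv c hr) (mkC c i 0 h1 hir (by omega)) ≤ m := by
  intro m
  induction m with
  | zero =>
    intro i h1 hir him
    have heq : (mkC c i 0 h1 hir (by omega) : HSVert r k) = wv c hr := by
      unfold wv
      apply mkC_eq <;> omega
    rw [heq, SimpleGraph.dist_self]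
  | succ m ih =>
    intro i h1 hir him
    have hadj := adj_spine (r := r) (k := k) c i h1 (show i + 1 ≤ r by omega)
    calc (HS r k).dist (wv c hr) (mkC c i 0 h1 hir (by omega))
        ≤ (HS r k).dist (wv c hr) (mkC c (i + 1) 0 (by omega) (by omega) (by omega)) +
          (HS r k).dist (mkC c (i + 1) 0 (by omega) (by omega) (by omega))
            (mkC c i 0 h1 hir (by omega)) := connected.dist_triangle
      _ ≤ m + 1 := by
          have hd : (HS r k).dist (mkC c (i + 1) 0 (by omega) (by omega) (by omega) : HSVert r k)
              (mkC c i 0 h1 hir (by omega)) = 1 :=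
            SimpleGraph.dist_eq_one_iff_adj.mpr hadj.symm
          have := ih (i + 1) (by omega) (by omega) (by omega)
          omega

lemma dist_le_hair (c : Fin k) (i : ℕ) (h1 : 1 ≤ i) (hir : i ≤ r) :
    ∀ j (h2 : j ≤ r - i),
      (HS r k).dist (mkC c i 0 h1 hir (by omega)) (mkC c i j h1 hir h2) ≤ j := by
  intro j
  induction j with
  | zero =>
    intro h2
    rw [SimpleGraph.dist_self]
  | succ j ih =>
    intro h2
    have hadj := adj_hair c i j h1 hir h2
    calc (HS r k).dist (mkC c i 0 h1 hir (by omega)) (mkC c i (j + 1) h1 hir h2)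
        ≤ (HS r k).dist (mkC c i 0 h1 hir (by omega)) (mkC c i j h1 hir (by omega)) +
          (HS r k).dist (mkC c i j h1 hir (by omega)) (mkC c i (j + 1) h1 hir h2) :=
            connected.dist_triangle
      _ ≤ j + 1 := by
          have hd := SimpleGraph.dist_eq_one_iff_adj.mpr hadj
          have := ih (by omega)
          omega

lemma dep_wv (c : Fin k) (hr : 1 ≤ r) : dep (wv c hr : HSVert r k) = r := by
  simp [dep, wv, mkC]

lemma gfun_wv (c : Fin k) (hr : 1 ≤ r) : gfun c (wv c hr : HSVert r k) = 0 := by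
  simp [gfun, wv, mkC]

lemma dist_wv (hr : 1 ≤ r) (c : Fin k) (v : HSVert r k) :
    (HS r k).dist (wv c hr) v = gfun c v := by
  refine le_antisymm ?_ ?_
  · -- upper bound
    have hthrough : ∀ u : HSVert r k, (HS r k).dist (wv c hr) u ≤ r + dep u := by
      intro u
      calc (HS r k).dist (wv c hr) u
          ≤ (HS r k).dist (wv c hr) (root r k) + (HS r k).dist (root r k) u :=
            connected.dist_triangle
        _ ≤ r + dep u := by
            have h1 : (HS r k).dist (wv c hr) (root r k) ≤ r := by
              rw [SimpleGraph.dist_comm]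
              have := dist_root_le (wv c hr : HSVert r k)
              rwa [dep_wv] at this
            have h2 := dist_root_le u
            omega
    rcases v with _ | t | ⟨c', p⟩
    · simpa [gfun, dep] using hthrough (Sum.inl ‹Unit›)
    · simpa [gfun, dep] using hthrough (Sum.inr (Sum.inl t))
    · by_cases hc : c' = c
      · have h1 := p.2.1
        have h2 := p.2.2
        have h3 := p.1.1.isLt
        rw [copy_eq_mkC, hc, gfun_mkC, if_pos rfl]
        calc (HS r k).dist (wv c hr) (mkC c (p.1.1 : ℕ) (p.1.2 : ℕ) _ _ _)
            ≤ (HS r k).dist (wv c hr) (mkC c (p.1.1 : ℕ) 0 p.2.1 (by omega) (by omega)) +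
              (HS r k).dist (mkC c (p.1.1 : ℕ) 0 p.2.1 (by omega) (by omega))
                (mkC c (p.1.1 : ℕ) (p.1.2 : ℕ) _ _ _) := connected.dist_triangle
          _ ≤ (r - (p.1.1 : ℕ)) + (p.1.2 : ℕ) := by
              have hs := dist_le_spine hr c (r - (p.1.1 : ℕ)) (p.1.1 : ℕ) p.2.1 (by omega)
                (by omega)
              have hh := dist_le_hair c (p.1.1 : ℕ) p.2.1 (by omega) (p.1.2 : ℕ) p.2.2
              omega
      · have h1 := p.2.1
        have := hthrough (Sum.inr (Sum.inr (c', p)))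
        simpa [gfun, dep, hc] using this
  · -- lower bound
    have := le_dist_of_fun (gfun c) (g_adj c) (connected.preconnected (wv c hr) v)
    rwa [gfun_wv, Nat.zero_add] at this

/-- For any index, there is a different index (when `2 ≤ k`). -/
lemma exists_other (hk : 2 ≤ k) (c : Fin k) : ∃ c'' : Fin k, c'' ≠ c := by
  refine ⟨⟨if (c : ℕ) = 0 then 1 else 0, by split <;> omega⟩, ?_⟩
  intro h
  have := congrArg Fin.val h
  simp only at this
  split at this <;> omega

lemma exists_g_ne (hk : 2 ≤ k) {u v : HSVert r k} (huv : u ≠ v) :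
    ∃ c : Fin k, gfun c u ≠ gfun c v := by
  have hk0 : 0 < k := by omega
  rcases u with u0 | t | ⟨c1, p1⟩ <;> rcases v with v0 | t' | ⟨c2, p2⟩
  · exact absurd rfl huv
  · exact ⟨⟨0, hk0⟩, by simp [gfun]⟩
  · obtain ⟨c'', hc''⟩ := exists_other hk c2
    have h1 := p2.2.1
    refine ⟨c'', ?_⟩
    simp only [gfun, if_neg (Ne.symm hc'')]
    omega
  · exact ⟨⟨0, hk0⟩, by simp [gfun]⟩
  · have ht : (t : ℕ) ≠ (t' : ℕ) := fun h => huv (congrArg (fun x => Sum.inr (Sum.inl x)) (Fin.ext h))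
    exact ⟨⟨0, hk0⟩, by simp [gfun]; omega⟩
  · -- path vs copy
    have h1 := p2.2.1
    have h2 := p2.2.2
    have h3 := p2.1.1.isLt
    by_cases hA : r + ((t : ℕ) + 1) = r + ((p2.1.1 : ℕ) + (p2.1.2 : ℕ))
    · refine ⟨c2, ?_⟩
      simp [gfun]
      omega
    · obtain ⟨c'', hc''⟩ := exists_other hk c2
      refine ⟨c'', ?_⟩
      simp [gfun, if_neg (Ne.symm hc'')]
      omega
  · obtain ⟨c'', hc''⟩ := exists_other hk c1
    have h1 := p1.2.1
    refine ⟨c'', ?_⟩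
    simp only [gfun, if_neg (Ne.symm hc'')]
    omega
  · -- copy vs path
    have h1 := p1.2.1
    have h2 := p1.2.2
    have h3 := p1.1.1.isLt
    by_cases hA : r + ((p1.1.1 : ℕ) + (p1.1.2 : ℕ)) = r + ((t' : ℕ) + 1)
    · refine ⟨c1, ?_⟩
      simp [gfun]
      omega
    · obtain ⟨c'', hc''⟩ := exists_other hk c1
      refine ⟨c'', ?_⟩
      simp [gfun, if_neg (Ne.symm hc'')]
      omega
  · -- copy vs copy
    have h11 := p1.2.1
    have h12 := p1.2.2
    have h13 := p1.1.1.isLt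
    have h21 := p2.2.1
    have h22 := p2.2.2
    have h23 := p2.1.1.isLt
    by_cases hc : c1 = c2
    · subst hc
      have hp : ¬((p1.1.1 : ℕ) = (p2.1.1 : ℕ) ∧ (p1.1.2 : ℕ) = (p2.1.2 : ℕ)) := by
        rintro ⟨ha, hb⟩
        exact huv (congrArg (fun x : LVert r => (Sum.inr (Sum.inr (c1, x)) : HSVert r k))
          (Subtype.ext (Prod.ext (Fin.ext ha) (Fin.ext hb))))
      by_cases hA : (r - (p1.1.1 : ℕ)) + (p1.1.2 : ℕ) = (r - (p2.1.1 : ℕ)) + (p2.1.2 : ℕ)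
      · obtain ⟨c'', hc''⟩ := exists_other hk c1
        refine ⟨c'', ?_⟩
        simp [gfun, if_neg (Ne.symm hc'')]
        omega
      · refine ⟨c1, ?_⟩
        simp [gfun]
        omega
    · by_cases hA : (r - (p1.1.1 : ℕ)) + (p1.1.2 : ℕ) = r + ((p2.1.1 : ℕ) + (p2.1.2 : ℕ))
      · refine ⟨c2, ?_⟩
        have hne : ¬ (c1 = c2) := hc
        simp [gfun, if_neg hne]
        omega
      · refine ⟨c1, ?_⟩
        have hne : ¬ (c2 = c1) := fun h => hc h.symm
        simp [gfun, if_neg hne]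
        omega

instance : DecidableEq (HSVert r k) := by
  unfold HSVert LVert; exact inferInstance

/-- Copy-index extractor. -/
def cIdx (dflt : Fin k) : HSVert r k → Fin k
  | Sum.inr (Sum.inr (c, _)) => c
  | _ => dflt

/-- Spine-coordinate extractor. -/
def iIdx : HSVert r k → ℕ
  | Sum.inr (Sum.inr (_, p)) => (p.1.1 : ℕ)
  | _ => 0

/-- Hair-coordinate extractor. -/
def jIdx : HSVert r k → ℕ
  | Sum.inr (Sum.inr (_, p)) => (p.1.2 : ℕ)
  | _ => 0

/-- Constructor discriminator. -/
def disc : HSVert r k → ℕ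
  | Sum.inl _ => 0
  | Sum.inr (Sum.inl _) => 1
  | Sum.inr (Sum.inr _) => 2

lemma wv_injective (hr : 1 ≤ r) : Function.Injective (fun c : Fin k => (wv c hr : HSVert r k)) := by
  intro c c' h
  have := congrArg (cIdx c) h
  simpa [cIdx, wv, mkC] using this

/-- The resolving set. -/
def Rset (hr : 1 ≤ r) : Finset (HSVert r k) :=
  Finset.univ.image (fun c : Fin k => (wv c hr : HSVert r k))

lemma Rset_card (hr : 1 ≤ r) : (Rset (k := k) hr).card = k := by
  rw [Rset, Finset.card_image_of_injective _ (wv_injective hr), Finset.card_univ,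
    Fintype.card_fin]

lemma Rset_resolves (hr : 1 ≤ r) (hk : 2 ≤ k) :
    (HS r k).IsResolvingSet ↑(Rset (k := k) hr) := by
  intro u v huv
  obtain ⟨c, hc⟩ := exists_g_ne hk huv
  refine ⟨wv c hr, ?_, ?_⟩
  · simp only [Rset, Finset.coe_image, Finset.coe_univ, Set.image_univ, Set.mem_range]
    exact ⟨c, rfl⟩
  · rw [dist_wv hr c u, dist_wv hr c v]
    exact hc

lemma mkC_ne_root (c : Fin k) (i j : ℕ) (h1 hir h2) :
    (mkC c i j h1 hir h2 : HSVert r k) ≠ root r k := by unfold mkC root; nofun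

lemma parent_mkC_hair (c : Fin k) (i j : ℕ) (h1 hir h2) (hj : 1 ≤ j) :
    parent (mkC c i j h1 hir h2 : HSVert r k) = mkC c i (j - 1) h1 hir (by omega) := by
  simp [parent, mkC, show ¬ j = 0 by omega]; rfl

lemma parent_mkC_spine (c : Fin k) (i : ℕ) (h1 hir h2) (hi : 2 ≤ i) :
    parent (mkC c i 0 h1 hir h2 : HSVert r k) = mkC c (i - 1) 0 (by omega) (by omega) (by omega) := by
  simp [parent, mkC, show ¬ i = 1 by omega]; rfl

lemma parent_mkC_one (c : Fin k) (h1 hir h2) :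
    parent (mkC c 1 0 h1 hir h2 : HSVert r k) = root r k := by
  simp [parent, mkC, root]; rfl

/-- A leaf `v` with parent `m` and no children has `m` as its unique neighbour. -/
lemma unique_nbr {v m : HSVert r k} (hv : v ≠ root r k) (hpar : parent v = m)
    (hnochild : ∀ x : HSVert r k, x ≠ root r k → parent x ≠ v) :
    ∀ x, (HS r k).Adj x v → x = m := by
  intro x hadj
  rcases adj_cases hadj with ⟨_, h⟩ | ⟨hx, h⟩
  · rw [h, hpar]
  · exact absurd h.symm (hnochild x hx)

lemma no_child_mkC (c : Fin k) (i j : ℕ) (h1 hir h2)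
    (hcond : j + 1 > r - i ∧ (j ≥ 1 ∨ i = r)) :
    ∀ x : HSVert r k, x ≠ root r k → parent x ≠ (mkC c i j h1 hir h2 : HSVert r k) := by
  intro x hx hpar
  rcases x with _ | t | ⟨c', p⟩
  · exact hx rfl
  · by_cases h : (t : ℕ) = 0
    · have := congrArg disc hpar
      simp [parent, h, disc, mkC] at this
    · have := congrArg disc hpar
      simp [parent, h, disc, mkC] at this
  · have hp1 := p.2.1
    have hp2 := p.2.2
    have hp3 := p.1.1.isLt
    by_cases hj0 : (p.1.2 : ℕ) = 0
    · by_cases hi1 : (p.1.1 : ℕ) = 1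
      · have := congrArg disc hpar
        simp [parent, hj0, hi1, disc, mkC] at this
      · have hI := congrArg iIdx hpar
        have hJ := congrArg jIdx hpar
        simp [parent, hj0, hi1, iIdx, jIdx, mkC] at hI hJ
        -- hI : p.1.1 - 1 = i, hJ : 0 = j
        omega
    · have hI := congrArg iIdx hpar
      have hJ := congrArg jIdx hpar
      simp [parent, hj0, iIdx, jIdx, mkC] at hI hJ
      -- hI : p.1.1 = i, hJ : p.1.2 - 1 = j
      omega

lemma dist_leafpair {v m : HSVert r k} (hv : v ≠ root r k) (hpar : parent v = m)
    (hnochild : ∀ x : HSVert r k, x ≠ root r k → parent x ≠ v) {z : HSVert r k} (hz : z ≠ v) :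
    (HS r k).dist z v = (HS r k).dist z m + 1 := by
  refine dist_pendant connected ?_ (unique_nbr hv hpar hnochild) hz
  rw [← hpar]
  exact adj_parent v hv

lemma cIdx_mkC (dflt c : Fin k) (i j : ℕ) (h1 hir h2) :
    cIdx dflt (mkC c i j h1 hir h2 : HSVert r k) = c := rfl

lemma lower_bound (hr : 1 ≤ r) (hk : 2 ≤ k) (R : Finset (HSVert r k))
    (hres : (HS r k).IsResolvingSet ↑R) : k ≤ R.card := by
  by_cases hr2 : 2 ≤ r
  · -- for each copy, R must contain one of the two deep leaves
    have key : ∀ c : Fin k, ∃ x ∈ R,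
        x = (mkC c r 0 hr le_rfl (by omega) : HSVert r k) ∨
        x = (mkC c (r-1) 1 (by omega) (by omega) (by omega) : HSVert r k) := by
      intro c
      set a := (mkC c r 0 hr le_rfl (by omega) : HSVert r k) with ha
      set b := (mkC c (r-1) 1 (by omega) (by omega) (by omega) : HSVert r k) with hb
      have hab : a ≠ b := by
        intro h
        have := congrArg iIdx h
        simp [iIdx, mkC, ha, hb] at this
        omega
      obtain ⟨x, hxR, hxd⟩ := hres a b hab
      refine ⟨x, hxR, ?_⟩
      by_contra hcon
      push_neg at hcon
      have hda : (HS r k).dist x a =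
          (HS r k).dist x (mkC c (r-1) 0 (by omega) (by omega) (by omega)) + 1 := by
        refine dist_leafpair (mkC_ne_root _ _ _ _ _ _) ?_ ?_ hcon.1
        · exact parent_mkC_spine c r hr le_rfl (by omega) hr2
        · exact no_child_mkC c r 0 hr le_rfl (by omega) (by omega)
      have hdb : (HS r k).dist x b =
          (HS r k).dist x (mkC c (r-1) 0 (by omega) (by omega) (by omega)) + 1 := by
        refine dist_leafpair (mkC_ne_root _ _ _ _ _ _) ?_ ?_ hcon.2
        · exact parent_mkC_hair c (r-1) 1 (by omega) (by omega) (by omega) le_rfl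
        · exact no_child_mkC c (r-1) 1 (by omega) (by omega) (by omega) (by omega)
      rw [hda, hdb] at hxd
      exact hxd rfl
    choose f hfR hfab using key
    have hcard := Finset.card_le_card_of_injOn (s := (Finset.univ : Finset (Fin k))) f
      (fun c _ => hfR c) ?_
    · rwa [Finset.card_univ, Fintype.card_fin] at hcard
    · intro c _ c' _ heq
      have h1 : cIdx c (f c) = c := by
        rcases hfab c with h | h <;> rw [h, cIdx_mkC]
      have h2 : cIdx c (f c') = c' := by
        rcases hfab c' with h | h <;> rw [h, cIdx_mkC]
      rw [← h1, heq, h2]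
  · -- r = 1 : the star-like case
    have hr1 : r = 1 := by omega
    set p0 : HSVert r k := Sum.inr (Sum.inl ⟨0, by omega⟩) with hp0
    set A := fun c : Fin k => (mkC c 1 0 le_rfl hr (by omega) : HSVert r k) with hA
    set L : Finset (HSVert r k) := Finset.univ.image A ∪ {p0} with hL
    -- every element of L is a pendant leaf attached to the root
    have hpend : ∀ x ∈ L, ∀ z : HSVert r k, z ≠ x →
        (HS r k).dist z x = (HS r k).dist z (root r k) + 1 := by
      intro x hx z hz
      rw [hL, Finset.mem_union, Finset.mem_image] at hx
      rcases hx with ⟨c, _, rfl⟩ | hx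
      · refine dist_leafpair (mkC_ne_root _ _ _ _ _ _) ?_ ?_ hz
        · exact parent_mkC_one c le_rfl hr (by omega)
        · exact no_child_mkC c 1 0 le_rfl hr (by omega) (by omega)
      · rw [Finset.mem_singleton] at hx
        subst hx
        refine dist_leafpair ?_ ?_ ?_ hz
        · rw [hp0]; unfold root; nofun
        · simp [parent, p0, root]; rfl
        · intro x hx hpar
          rcases x with _ | t | ⟨c', p⟩
          · exact hx rfl
          · by_cases h : (t : ℕ) = 0
            · have := congrArg disc hpar
              simp [parent, h, disc, p0, root] at this
            · have := t.isLt; omega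
          · have hq1 := p.2.1
            by_cases hj0 : (p.1.2 : ℕ) = 0
            · by_cases hi1 : (p.1.1 : ℕ) = 1
              · have := congrArg disc hpar
                simp [parent, hj0, hi1, disc, p0] at this
              · have := congrArg disc hpar
                simp [parent, hj0, hi1, disc, p0] at this
            · have := congrArg disc hpar
              simp [parent, hj0, disc, p0] at this
    -- at most one element of L avoids R
    have hone : (L \ R).card ≤ 1 := by
      by_contra hcon
      push_neg at hcon
      obtain ⟨x, hxm, y, hym, hxy⟩ := Finset.one_lt_card.mp hcon
      rw [Finset.mem_sdiff] at hxm hym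
      obtain ⟨z, hzR, hzd⟩ := hres x y hxy
      have hzx : z ≠ x := fun h => hxm.2 (h ▸ hzR)
      have hzy : z ≠ y := fun h => hym.2 (h ▸ hzR)
      rw [hpend x hxm.1 z hzx, hpend y hym.1 z hzy] at hzd
      exact hzd rfl
    -- |L| = k + 1
    have hLcard : L.card = k + 1 := by
      rw [hL, Finset.card_union_of_disjoint, Finset.card_image_of_injective _ ?_,
        Finset.card_univ, Fintype.card_fin, Finset.card_singleton]
      · intro c c' h
        have h1 : cIdx c (A c) = c := cIdx_mkC c c 1 0 _ _ _
        have h2 : cIdx c (A c') = c' := cIdx_mkC c c' 1 0 _ _ _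
        rw [← h1, h, h2]
      · rw [Finset.disjoint_singleton_right, Finset.mem_image]
        rintro ⟨c, _, hc⟩
        have := congrArg disc hc
        simp [disc, hA, mkC, p0] at this
    have := Finset.card_inter_add_card_sdiff L R
    have hsub : (L ∩ R).card ≤ R.card := Finset.card_le_card (Finset.inter_subset_right)
    omega

lemma hs_isTree : (HS r k).IsTree := by
  constructor
  · exact connected
  · refine acyclic_of_parent parent dep ?_
    intro u v h
    rcases adj_cases h with ⟨hv, rfl⟩ | ⟨hu, rfl⟩
    · exact Or.inl ⟨rfl, dep_parent v hv⟩
    · exact Or.inr ⟨rfl, dep_parent u hu⟩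

lemma edist_eq_dist (u v : HSVert r k) :
    (HS r k).edist u v = ((HS r k).dist u v : ℕ∞) :=
  (ENat.coe_toNat (SimpleGraph.edist_ne_top_iff_reachable.mpr (connected.preconnected u v))).symm

lemma hs_diam (hr : 1 ≤ r) (hk : 2 ≤ k) : (HS r k).diam = 2 * r := by
  have hub : ∀ u v : HSVert r k, (HS r k).dist u v ≤ 2 * r := by
    intro u v
    have h1 : (HS r k).dist u v ≤ (HS r k).dist u (root r k) + (HS r k).dist (root r k) v :=
      connected.dist_triangle
    have h2 : (HS r k).dist u (root r k) ≤ r := by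
      rw [SimpleGraph.dist_comm]
      exact le_trans (dist_root_le u) (dep_le u)
    have h3 : (HS r k).dist (root r k) v ≤ r :=
      le_trans (dist_root_le v) (dep_le v)
    omega
  have hediam : (HS r k).ediam = ((2 * r : ℕ) : ℕ∞) := by
    apply le_antisymm
    · apply SimpleGraph.ediam_le_of_edist_le
      intro u v
      rw [edist_eq_dist]
      exact_mod_cast hub u v
    · have hd : (HS r k).dist (wv ⟨0, by omega⟩ hr)
          (mkC ⟨1, by omega⟩ 1 (r - 1) le_rfl hr (by omega)) = 2 * r := by
        rw [dist_wv, gfun_mkC, if_neg ?_]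
        · omega
        · intro h
          have := congrArg Fin.val h
          simp at this
      calc ((2 * r : ℕ) : ℕ∞) = (HS r k).edist (wv ⟨0, by omega⟩ hr)
            (mkC ⟨1, by omega⟩ 1 (r - 1) le_rfl hr (by omega)) := by
            rw [edist_eq_dist, hd]
        _ ≤ (HS r k).ediam := SimpleGraph.edist_le_ediam
  show (HS r k).ediam.toNat = 2 * r
  rw [hediam]
  exact ENat.toNat_coe _

lemma sum_aux2 (n : ℕ) : 2 * (∑ a ∈ Finset.range n, (n - a)) = n * (n + 1) := by
  induction n with
  | zero => simp
  | succ n ih =>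
    rw [Finset.sum_range_succ]
    have hstep : ∑ a ∈ Finset.range n, (n + 1 - a) = (∑ a ∈ Finset.range n, (n - a)) + n := by
      have : ∀ a ∈ Finset.range n, n + 1 - a = (n - a) + 1 := by
        intro a ha
        have := Finset.mem_range.mp ha
        omega
      rw [Finset.sum_congr rfl this, Finset.sum_add_distrib, Finset.sum_const,
        Finset.card_range, smul_eq_mul, mul_one]
    rw [hstep]
    ring_nf
    ring_nf at ih
    omega

lemma sum_aux (n : ℕ) :
    2 * (∑ a ∈ Finset.range (n + 1), if 1 ≤ a then n - a + 1 else 0) = n * (n + 1) := by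
  rw [Finset.sum_range_succ']
  have h1 : ∑ i ∈ Finset.range n, (if 1 ≤ i + 1 then n - (i + 1) + 1 else 0) =
      ∑ i ∈ Finset.range n, (n - i) := by
    refine Finset.sum_congr rfl ?_
    intro i hi
    have := Finset.mem_range.mp hi
    rw [if_pos (by omega)]
    omega
  rw [h1]
  simp only [if_neg (by omega : ¬ (1 ≤ 0)), Nat.add_zero]
  exact sum_aux2 n

lemma two_mul_card_lv :
    2 * Fintype.card {p : Fin (r + 1) × Fin (r + 1) // 1 ≤ (p.1 : ℕ) ∧ (p.2 : ℕ) ≤ r - (p.1 : ℕ)} =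
      r * (r + 1) := by
  have e1 := Equiv.subtypeProdEquivSigmaSubtype
    (fun (a : Fin (r + 1)) (b : Fin (r + 1)) => 1 ≤ (a : ℕ) ∧ (b : ℕ) ≤ r - (a : ℕ))
  rw [Fintype.card_congr e1, Fintype.card_sigma]
  have hcount : ∀ a : Fin (r + 1),
      Fintype.card {b : Fin (r + 1) // 1 ≤ (a : ℕ) ∧ (b : ℕ) ≤ r - (a : ℕ)} =
        if 1 ≤ (a : ℕ) then r - (a : ℕ) + 1 else 0 := by
    intro a
    by_cases h : 1 ≤ (a : ℕ)
    · rw [if_pos h]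
      have e2 : {b : Fin (r + 1) // 1 ≤ (a : ℕ) ∧ (b : ℕ) ≤ r - (a : ℕ)} ≃
          Fin (r - (a : ℕ) + 1) :=
        { toFun := fun b => ⟨(b.1 : ℕ), by have := b.2.2; omega⟩
          invFun := fun x => ⟨⟨(x : ℕ), by have := x.isLt; omega⟩, by
            refine ⟨h, ?_⟩
            show (x : ℕ) ≤ r - (a : ℕ)
            have := x.isLt
            omega⟩
          left_inv := fun b => Subtype.ext (Fin.ext rfl)
          right_inv := fun x => Fin.ext rfl }
      rw [Fintype.card_congr e2, Fintype.card_fin]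
    · rw [if_neg h]
      rw [Fintype.card_eq_zero_iff]
      exact ⟨fun b => h b.2.1⟩
  rw [Finset.sum_congr rfl (fun a _ => hcount a)]
  rw [Fin.sum_univ_eq_sum_range (fun a => if 1 ≤ a then r - a + 1 else 0) (r + 1)]
  exact sum_aux r

lemma card_hsvert :
    2 * Fintype.card (HSVert r k) = 2 * (1 + r) + k * (r * (r + 1)) := by
  have h0 : Fintype.card (HSVert r k) =
      Fintype.card (Unit ⊕ Fin r ⊕ (Fin k ×
        {p : Fin (r + 1) × Fin (r + 1) // 1 ≤ (p.1 : ℕ) ∧ (p.2 : ℕ) ≤ r - (p.1 : ℕ)})) :=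
    Fintype.card_congr (Equiv.refl _)
  rw [h0]
  simp only [Fintype.card_sum, Fintype.card_prod, Fintype.card_fin, Fintype.card_unit]
  calc 2 * (1 + (r + k * Fintype.card
        {p : Fin (r + 1) × Fin (r + 1) // 1 ≤ (p.1 : ℕ) ∧ (p.2 : ℕ) ≤ r - (p.1 : ℕ)}))
      = 2 * (1 + r) + k * (2 * Fintype.card
        {p : Fin (r + 1) × Fin (r + 1) // 1 ≤ (p.1 : ℕ) ∧ (p.2 : ℕ) ≤ r - (p.1 : ℕ)}) := by
        ring
    _ = 2 * (1 + r) + k * (r * (r + 1)) := by rw [two_mul_card_lv]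

end HSAux

theorem statement19 (d k : ℕ) (hk : 2 ≤ k) (hd : Even d) (hd2 : 2 ≤ d) :
    (HS (d / 2) k).IsTree ∧ (HS (d / 2) k).diam = d ∧
      (HS (d / 2) k).HasMetricDim k ∧
      8 * Fintype.card (HSVert (d / 2) k) = (k * d + 4) * (d + 2) := by
  obtain ⟨r, rfl⟩ : ∃ r, d = 2 * r := by
    rcases hd with ⟨m, hm⟩
    exact ⟨m, by omega⟩
  have h2 : 2 * r / 2 = r := by omega
  rw [h2]
  have hr : 1 ≤ r := by omega
  refine ⟨HSAux.hs_isTree, HSAux.hs_diam hr hk, ?_, ?_⟩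
  · exact ⟨⟨HSAux.Rset hr, HSAux.Rset_resolves hr hk, HSAux.Rset_card hr⟩,
      fun R hR => HSAux.lower_bound hr hk R hR⟩
  · have hc := HSAux.card_hsvert (r := r) (k := k)
    calc 8 * Fintype.card (HSVert r k) = 4 * (2 * Fintype.card (HSVert r k)) := by ring
      _ = 4 * (2 * (1 + r) + k * (r * (r + 1))) := by rw [hc]
      _ = (k * (2 * r) + 4) * (2 * r + 2) := by ring
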